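/- Let M_H, M_V, N ≥ 1 be natural numbers and set M = M_H·M_V. For i ∈ {u, j}, let β_i ∈ ℂ, σ_i, ς_i, c_i ∈ ℝ, and λ > 0. Let a_i ∈ ℂ^M be the vector indexed by pairs (m₁, m₂) with 0 ≤ m₁ < M_H and 0 ≤ m₂ < M_V whose (m₁, m₂)-th entry is exp(i·(2π/λ)·(m₁·σ_i + m₂·ς_i + c_i)), and let b_i ∈ ℂ^N be any vector with |[b_i]_n| = 1 for all n. Define the rank-one LoS channels H_i = β_i · a_i·b_iᵀ ∈ ℂ^{M×N}. If sin(π(σ_j − σ_u)/λ) ≠ 0 and sin(π(ς_j − ς_u)/λ) ≠ 0, then the inter-user interference power satisfies ‖H_uᴴ H_j‖_F² = N² · |β_u|² · |β_j|² · (sin²(π·M_H·(σ_j − σ_u)/λ) / sin²(π·(σ_j − σ_u)/λ)) · (sin²(π·M_V·(ς_j − ς_u)/λ) / sin²(π·(ς_j − ς_u)/λ)). (This is the closed-form interference expression underlying Corollary 1.) -/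

import Mathlib

open Matrix Finset

lemma abs_exp_I_sub_one_sq (θ : ℝ) :
    ‖Complex.exp (Complex.I * θ) - 1‖ ^ 2 = 4 * Real.sin (θ/2) ^ 2 := by
  rw [Complex.sq_norm]
  have h : (Complex.I * θ) = (θ : ℂ) * Complex.I := by ring
  rw [h, Complex.normSq_apply]
  simp [Complex.exp_ofReal_mul_I_re, Complex.exp_ofReal_mul_I_im]
  have hc := Real.cos_two_mul (θ/2)
  rw [show 2*(θ/2) = θ by ring] at hc
  have h3 := Real.sin_sq_add_cos_sq θ
  have h4 := Real.sin_sq_add_cos_sq (θ/2)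
  nlinarith [hc, h3, h4]

lemma abs_geom_sum_sq (M : ℕ) (x : ℝ) (hx : Real.sin (x/2) ≠ 0) :
    ‖∑ m : Fin M, Complex.exp (Complex.I * ((m : ℝ) * x))‖ ^ 2
      = Real.sin (M * x / 2) ^ 2 / Real.sin (x / 2) ^ 2 := by
  have hzne : Complex.exp (Complex.I * x) ≠ 1 := by
    intro h
    rw [Complex.exp_eq_one_iff] at h
    obtain ⟨n, hn⟩ := h
    have hx' : (x : ℂ) = (n : ℂ) * (2 * Real.pi) := by
      have hI : (Complex.I : ℂ) ≠ 0 := Complex.I_ne_zero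
      apply mul_left_cancel₀ hI
      rw [hn]; ring
    have hxr : x = n * (2 * Real.pi) := by exact_mod_cast hx'
    apply hx
    rw [hxr, show (n : ℝ) * (2 * Real.pi) / 2 = n * Real.pi by ring, Real.sin_int_mul_pi]
  have hterm : ∀ m : Fin M, Complex.exp (Complex.I * ((m : ℝ) * x))
      = Complex.exp (Complex.I * x) ^ (m : ℕ) := by
    intro m
    rw [← Complex.exp_nat_mul]
    congr 1
    push_cast
    ring
  simp_rw [hterm]
  rw [Fin.sum_univ_eq_sum_range (fun k => Complex.exp (Complex.I * x) ^ k), geom_sum_eq hzne]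
  rw [norm_div, div_pow, ← Complex.exp_nat_mul]
  have h1 : (M : ℂ) * (Complex.I * x) = Complex.I * ((M * x : ℝ) : ℂ) := by push_cast; ring
  rw [h1, abs_exp_I_sub_one_sq, abs_exp_I_sub_one_sq]
  rw [mul_div_mul_left _ _ (by norm_num : (4:ℝ) ≠ 0)]

/-- Closed-form inter-user interference (Corollary 1): for rank-one LoS channels generated by
UPA steering vectors with per-index phase increments `σ_i, ς_i`, the interference power is
`‖H_uᴴ H_j‖_F² = N²·|β_u|²·|β_j|²·(sin²(πM_H(σ_j−σ_u)/λ)/sin²(π(σ_j−σ_u)/λ))·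
(sin²(πM_V(ς_j−ς_u)/λ)/sin²(π(ς_j−ς_u)/λ))`. -/
theorem upa_interference_closed_form
    (M_H M_V N : ℕ) (hMH : 1 ≤ M_H) (hMV : 1 ≤ M_V) (hN : 1 ≤ N)
    (βu βj : ℂ) (σu σj ςu ςj cu cj lam : ℝ) (hlam : 0 < lam)
    (bu bj : Fin N → ℂ)
    (hbu : ∀ n, ‖bu n‖ = 1) (hbj : ∀ n, ‖bj n‖ = 1)
    (Hu Hj : Matrix (Fin M_H × Fin M_V) (Fin N) ℂ)
    (hHu : ∀ m n, Hu m n = βu *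
      Complex.exp (Complex.I *
        (((2 * Real.pi / lam) * ((m.1 : ℝ) * σu + (m.2 : ℝ) * ςu + cu) : ℝ) : ℂ)) * bu n)
    (hHj : ∀ m n, Hj m n = βj *
      Complex.exp (Complex.I *
        (((2 * Real.pi / lam) * ((m.1 : ℝ) * σj + (m.2 : ℝ) * ςj + cj) : ℝ) : ℂ)) * bj n)
    (hσ : Real.sin (Real.pi * (σj - σu) / lam) ≠ 0)
    (hς : Real.sin (Real.pi * (ςj - ςu) / lam) ≠ 0) :
    ∑ n₁, ∑ n₂, ‖(Huᴴ * Hj) n₁ n₂‖ ^ 2 =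
      (N : ℝ) ^ 2 * ‖βu‖ ^ 2 * ‖βj‖ ^ 2 *
        (Real.sin (Real.pi * M_H * (σj - σu) / lam) ^ 2 /
          Real.sin (Real.pi * (σj - σu) / lam) ^ 2) *
        (Real.sin (Real.pi * M_V * (ςj - ςu) / lam) ^ 2 /
          Real.sin (Real.pi * (ςj - ςu) / lam) ^ 2) := by
  set x : ℝ := 2 * Real.pi * (σj - σu) / lam with hxdef
  set y : ℝ := 2 * Real.pi * (ςj - ςu) / lam with hydef
  set c : ℝ := 2 * Real.pi * (cj - cu) / lam with hcdef
  set Sx : ℂ := ∑ m : Fin M_H, Complex.exp (Complex.I * ((m : ℝ) * x)) with hSx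
  set Sy : ℂ := ∑ m : Fin M_V, Complex.exp (Complex.I * ((m : ℝ) * y)) with hSy
  have hconj : ∀ r : ℝ, (starRingEnd ℂ) (Complex.exp (Complex.I * r))
      = Complex.exp (-(Complex.I * r)) := by
    intro r
    rw [← Complex.exp_conj]
    congr 1
    simp [Complex.conj_I]
  have key : ∀ n₁ n₂, (Huᴴ * Hj) n₁ n₂ =
      (starRingEnd ℂ) βu * βj * (starRingEnd ℂ) (bu n₁) * bj n₂ *
        Complex.exp (Complex.I * (c : ℂ)) * (Sx * Sy) := by
    intro n₁ n₂
    have hterm : ∀ m : Fin M_H × Fin M_V,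
        (starRingEnd ℂ) (Hu m n₁) * Hj m n₂ =
        (starRingEnd ℂ) βu * βj * (starRingEnd ℂ) (bu n₁) * bj n₂ *
          Complex.exp (Complex.I * (c : ℂ)) *
          (Complex.exp (Complex.I * (((m.1 : ℝ) * x : ℝ) : ℂ)) *
           Complex.exp (Complex.I * (((m.2 : ℝ) * y : ℝ) : ℂ))) := by
      intro m
      have hE : Complex.exp (-(Complex.I *
            (((2 * Real.pi / lam) * ((m.1 : ℝ) * σu + (m.2 : ℝ) * ςu + cu) : ℝ) : ℂ))) *
          Complex.exp (Complex.I *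
            (((2 * Real.pi / lam) * ((m.1 : ℝ) * σj + (m.2 : ℝ) * ςj + cj) : ℝ) : ℂ))
          = Complex.exp (Complex.I * (c : ℂ)) *
            (Complex.exp (Complex.I * (((m.1 : ℝ) * x : ℝ) : ℂ)) *
             Complex.exp (Complex.I * (((m.2 : ℝ) * y : ℝ) : ℂ))) := by
        rw [← Complex.exp_add, ← Complex.exp_add, ← Complex.exp_add]
        congr 1
        rw [hxdef, hydef, hcdef]
        push_cast
        ring
      rw [hHu, hHj, _root_.map_mul, _root_.map_mul, hconj]
      linear_combination ((starRingEnd ℂ) βu * βj * (starRingEnd ℂ) (bu n₁) * bj n₂) * hE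
    rw [Matrix.mul_apply]
    simp only [Matrix.conjTranspose_apply, Matrix.star_apply, RCLike.star_def]
    rw [Finset.sum_congr rfl (fun m _ => hterm m), ← Finset.mul_sum, hSx, hSy,
      Finset.sum_mul_sum, Fintype.sum_prod_type]
    push_cast
    ring_nf
    congr 1
    refine Finset.sum_congr rfl (fun a _ => Finset.sum_congr rfl (fun b _ => ?_))
    ring_nf
  have hx2 : Real.sin (x / 2) ≠ 0 := by
    rw [show x / 2 = Real.pi * (σj - σu) / lam by rw [hxdef]; ring]
    exact hσ
  have hy2 : Real.sin (y / 2) ≠ 0 := by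
    rw [show y / 2 = Real.pi * (ςj - ςu) / lam by rw [hydef]; ring]
    exact hς
  have hSx2 : ‖Sx‖ ^ 2
      = Real.sin (Real.pi * M_H * (σj - σu) / lam) ^ 2 /
        Real.sin (Real.pi * (σj - σu) / lam) ^ 2 := by
    rw [hSx, abs_geom_sum_sq M_H x hx2,
      show (M_H : ℝ) * x / 2 = Real.pi * M_H * (σj - σu) / lam by rw [hxdef]; ring,
      show x / 2 = Real.pi * (σj - σu) / lam by rw [hxdef]; ring]
  have hSy2 : ‖Sy‖ ^ 2
      = Real.sin (Real.pi * M_V * (ςj - ςu) / lam) ^ 2 /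
        Real.sin (Real.pi * (ςj - ςu) / lam) ^ 2 := by
    rw [hSy, abs_geom_sum_sq M_V y hy2,
      show (M_V : ℝ) * y / 2 = Real.pi * M_V * (ςj - ςu) / lam by rw [hydef]; ring,
      show y / 2 = Real.pi * (ςj - ςu) / lam by rw [hydef]; ring]
  have habs : ∀ n₁ n₂ : Fin N, ‖(Huᴴ * Hj) n₁ n₂‖ ^ 2
      = ‖βu‖ ^ 2 * ‖βj‖ ^ 2 *
        (‖Sx‖ ^ 2 * ‖Sy‖ ^ 2) := by
    intro n₁ n₂
    rw [key n₁ n₂]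
    simp only [norm_mul, Complex.norm_conj, hbu, hbj, Complex.norm_exp]
    have : (Complex.I * (c : ℂ)).re = 0 := by simp
    rw [this, Real.exp_zero]
    ring
  simp_rw [habs]
  simp only [Finset.sum_const, Finset.card_univ, Fintype.card_fin, nsmul_eq_mul]
  rw [hSx2, hSy2]
  ring
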